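/- Let q be a prime power, n a positive integer, and L(x) = ∑_{i=0}^{n-1} a_i x^{q^i} a q-linear polynomial over F_{q^n}. If the map x ↦ L(x)·x^{-(q+1)} (where x^{-1} denotes x^{q^n-2}, so 0 maps to 0) is a bijection of F_{q^n}, then L is a bijection of F_{q^n} and the map x ↦ L^{-1}(x^{q+1})·x^{-1} is also a bijection of F_{q^n}, where L^{-1} denotes the inverse map of L. -/

import Mathlib

/-- If `x ↦ L(x)·x^{-(q+1)}` is a bijection of `F_{q^n}`, then `L` is a
bijection and `x ↦ L⁻¹(x^{q+1})·x^{-1}` is a bijection. -/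
theorem stmt_2 (q n : ℕ) (hq : IsPrimePow q) (hn : 0 < n)
    (F : Type*) [Field F] [Fintype F] (hF : Fintype.card F = q ^ n)
    (a : ℕ → F)
    (L : F → F) (hL : ∀ x, L x = ∑ i ∈ Finset.range n, a i * x ^ q ^ i)
    (h : Function.Bijective fun x : F => L x * (x⁻¹) ^ (q + 1)) :
    Function.Bijective L ∧
      Function.Bijective fun x : F => Function.invFun L (x ^ (q + 1)) * x⁻¹ := by
  obtain ⟨r, k, hr, hk, hrk⟩ := hq
  rw [Nat.prime_iff.symm] at hr
  -- characteristic
  set p := ringChar F with hp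
  haveI : CharP F p := ringChar.charP F
  have hpprime : p.Prime := CharP.char_is_prime F p
  haveI : Fact p.Prime := ⟨hpprime⟩
  obtain ⟨m, -, hcard⟩ := FiniteField.card F p
  -- p = r
  have hpq : p = r := by
    have h1 : p ^ (m : ℕ) = r ^ (k * n) := by
      rw [← hcard, hF, ← hrk, pow_mul]
    have hdvd : p ∣ r ^ (k * n) := by
      rw [← h1]
      exact dvd_pow_self p m.pos.ne'
    have := hpprime.dvd_of_dvd_pow hdvd
    exact (Nat.prime_dvd_prime_iff_eq hpprime hr).mp this
  have hqp : q = p ^ k := by rw [hpq, hrk]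
  have hqpos : 0 < q := by exact hqp ▸ pow_pos hpprime.pos k
  -- L 0 = 0
  have hL0 : L 0 = 0 := by
    rw [hL]
    refine Finset.sum_eq_zero fun i _ => ?_
    rw [zero_pow (by positivity), mul_zero]
  -- L is subtractive
  have hLsub : ∀ x y : F, L (x - y) = L x - L y := by
    intro x y
    rw [hL, hL, hL, ← Finset.sum_sub_distrib]
    refine Finset.sum_congr rfl fun i _ => ?_
    rw [← mul_sub]
    congr 1
    rw [hqp, ← pow_mul]
    exact sub_pow_char_pow x y (k * i)
  -- L x ≠ 0 for x ≠ 0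
  have hLne : ∀ x : F, x ≠ 0 → L x ≠ 0 := by
    intro x hx hLx
    apply hx
    have : (fun x : F => L x * (x⁻¹) ^ (q + 1)) x
        = (fun x : F => L x * (x⁻¹) ^ (q + 1)) 0 := by
      simp [hLx, hL0]
    exact h.injective this
  -- L injective
  have hLinj : Function.Injective L := by
    intro x y hxy
    have : L (x - y) = 0 := by rw [hLsub, hxy, sub_self]
    by_contra hne
    exact hLne (x - y) (sub_ne_zero.mpr hne) this
  have hLbij : Function.Bijective L := Finite.injective_iff_bijective.mp hLinj
  refine ⟨hLbij, ?_⟩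
  -- properties of invFun L
  have hright : ∀ z : F, L (Function.invFun L z) = z :=
    fun z => Function.rightInverse_invFun hLbij.surjective z
  have hinv0 : Function.invFun L 0 = 0 := by
    apply hLinj
    rw [hright, hL0]
  have hinvne : ∀ z : F, z ≠ 0 → Function.invFun L z ≠ 0 := by
    intro z hz hc
    apply hz
    rw [← hright z, hc, hL0]
  rw [← Finite.injective_iff_bijective]
  intro x y hxy
  simp only at hxy
  by_cases hx : x = 0
  · subst hx
    by_cases hy : y = 0
    · exact hy.symm
    · exfalso
      rw [zero_pow (Nat.succ_ne_zero q), hinv0, zero_mul] at hxy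
      have h1 : Function.invFun L (y ^ (q + 1)) ≠ 0 :=
        hinvne _ (pow_ne_zero _ hy)
      exact (mul_ne_zero h1 (inv_ne_zero hy)) hxy.symm
  · by_cases hy : y = 0
    · exfalso
      subst hy
      rw [zero_pow (Nat.succ_ne_zero q), hinv0, zero_mul] at hxy
      have h1 : Function.invFun L (x ^ (q + 1)) ≠ 0 :=
        hinvne _ (pow_ne_zero _ hx)
      exact (mul_ne_zero h1 (inv_ne_zero hx)) hxy
    · -- both nonzero
      set u := Function.invFun L (x ^ (q + 1)) with hu
      set v := Function.invFun L (y ^ (q + 1)) with hv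
      have hune : u ≠ 0 := hinvne _ (pow_ne_zero _ hx)
      have hvne : v ≠ 0 := hinvne _ (pow_ne_zero _ hy)
      set w := u * x⁻¹ with hw
      have hwne : w ≠ 0 := mul_ne_zero hune (inv_ne_zero hx)
      have hxw : x = u * w⁻¹ := by
        rw [hw, mul_inv, inv_inv, ← mul_assoc, mul_inv_cancel₀ hune, one_mul]
      have hyw : y = v * w⁻¹ := by
        have : v * y⁻¹ = w := hxy.symm
        rw [← this]
        field_simp
      have hLu : L u = x ^ (q + 1) := hright _
      have hLv : L v = y ^ (q + 1) := hright _
      have hfu : (fun x : F => L x * (x⁻¹) ^ (q + 1)) u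
          = (fun x : F => L x * (x⁻¹) ^ (q + 1)) v := by
        simp only
        rw [hLu, hLv, hxw, hyw]
        field_simp
        have e1 : u * u ^ q * u⁻¹ * u⁻¹ ^ q = 1 := by
          rw [inv_pow, mul_assoc u, mul_comm (u ^ q) u⁻¹, ← mul_assoc u, mul_inv_cancel₀ hune, one_mul, mul_inv_cancel₀ (pow_ne_zero _ hune)]
        have e2 : v * v ^ q * v⁻¹ * v⁻¹ ^ q = 1 := by
          rw [inv_pow, mul_assoc v, mul_comm (v ^ q) v⁻¹, ← mul_assoc v, mul_inv_cancel₀ hvne, one_mul, mul_inv_cancel₀ (pow_ne_zero _ hvne)]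
        linear_combination (w⁻¹ * w⁻¹ ^ q) * (e1 - e2)
      have huv : u = v := h.injective hfu
      rw [hxw, hyw, huv]
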